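/- Let H be a hypertree with vertex set V, and let G_H be the edge-coloured graph on V obtained by adding, for each hyperedge e of H, a complete graph on the vertex set of e, with all edges arising from e coloured by a colour specific to e (so that edges arising from distinct hyperedges receive distinct colours). Then G_H contains a rainbow spanning tree. -/

import Mathlib

private lemma walk_exists_edge_end {V : Type*} {G : SimpleGraph V} :
    ∀ {a b : V} (w : G.Walk a b), a ≠ b → ∃ z, s(z, b) ∈ w.edges := by
  intro a b w
  induction w with
  | nil => intro h; exact absurd rfl h
  | @cons a c b h' q ih =>
    intro _
    by_cases hcb : c = b
    · subst hcb; exact ⟨a, by simp⟩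
    · obtain ⟨z, hz⟩ := ih hcb
      exact ⟨z, by simp [SimpleGraph.Walk.edges_cons, hz]⟩


/-- **The graph `G_H` of a hypertree has a rainbow spanning tree.**
Let `H = (V, E)` be a hypertree and let `G_H` be the edge-coloured graph on `V`
obtained by adding, for each hyperedge `e ∈ E`, a complete graph on `e`, all of
whose edges get a colour specific to `e`.  A rainbow spanning tree of `G_H` is
a tree `T` on `V` together with an assignment `φ` of a hyperedge (colour) to
each edge of `T` such that each edge of `T` joins two vertices of its assigned
hyperedge (so the edge lies in the complete graph on that hyperedge) and
distinct edges of `T` get distinct hyperedges.  We assert that such a rainbow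
spanning tree exists. -/
theorem hypertree_complete_blowup_has_rainbow_spanning_tree
    {V : Type*} [Fintype V] [DecidableEq V] [Nonempty V]
    (E : Finset (Finset V))
    (hsimple : ∀ e ∈ E, 2 ≤ e.card)
    (hsub : ∀ X : Finset V, (E.filter (fun e => e ⊆ X)).card ≤ X.card - 1)
    (hfull : E.card = Fintype.card V - 1) :
    ∃ (T : SimpleGraph V) (φ : Sym2 V → Finset V),
      T.IsTree ∧
      Set.InjOn φ T.edgeSet ∧
      ∀ s ∈ T.edgeSet, φ s ∈ E ∧ ∀ v ∈ s, v ∈ φ s := by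
  
  classical
  obtain ⟨r⟩ := (inferInstance : Nonempty V)
  -- Hall's condition for choosing a distinct vertex (≠ r) from each hyperedge
  have hall : ∀ S : Finset {e // e ∈ E},
      S.card ≤ (S.biUnion fun e => e.1.erase r).card := by
    intro S
    set X : Finset V := S.biUnion fun e => e.1 with hX
    have h1 : S.card ≤ (E.filter (fun e => e ⊆ X)).card := by
      have hsubset : S.image (fun e => e.1) ⊆ E.filter (fun e => e ⊆ X) := by
        intro e he
        simp only [Finset.mem_image] at he
        obtain ⟨f, hf, rfl⟩ := he
        refine Finset.mem_filter.2 ⟨f.2, fun x hx => ?_⟩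
        exact Finset.mem_biUnion.2 ⟨f, hf, hx⟩
      calc S.card = (S.image (fun e => e.1)).card :=
            (Finset.card_image_of_injective _ Subtype.val_injective).symm
        _ ≤ _ := Finset.card_le_card hsubset
    have h2 : S.biUnion (fun e => e.1.erase r) = X.erase r := by
      ext x
      simp only [Finset.mem_biUnion, Finset.mem_erase, hX]
      tauto
    have h3 : X.card - 1 ≤ (X.erase r).card := by
      rcases em (r ∈ X) with h | h
      · rw [Finset.card_erase_of_mem h]
      · rw [Finset.erase_eq_of_notMem h]; omega
    rw [h2]
    exact le_trans (le_trans h1 (hsub X)) h3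
  obtain ⟨m, minj, hm⟩ :=
    (Finset.all_card_le_biUnion_card_iff_exists_injective
      (fun e : {e // e ∈ E} => e.1.erase r)).1 hall
  -- m is a bijection onto V \ {r}
  have hmr : ∀ e : {e // e ∈ E}, m e ≠ r := fun e => (Finset.mem_erase.1 (hm e)).1
  have hme : ∀ e : {e // e ∈ E}, m e ∈ e.1 := fun e => (Finset.mem_erase.1 (hm e)).2
  let m' : {e // e ∈ E} → {v : V // v ≠ r} := fun e => ⟨m e, hmr e⟩
  have hm'inj : Function.Injective m' := by
    intro a b hab
    exact minj (congrArg Subtype.val hab)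
  have hcards : Fintype.card {e // e ∈ E} = Fintype.card {v : V // v ≠ r} := by
    rw [Fintype.card_coe, hfull, Fintype.card_subtype_compl, Fintype.card_subtype_eq]
  have hm'bij : Function.Bijective m' :=
    (Fintype.bijective_iff_injective_and_card m').2 ⟨hm'inj, hcards⟩
  let em' := Equiv.ofBijective m' hm'bij
  let D : {v : V // v ≠ r} → {e // e ∈ E} := em'.symm
  have hmD : ∀ v : {v : V // v ≠ r}, m (D v) = v.1 := fun v =>
    congrArg Subtype.val (em'.apply_symm_apply v)
  -- the colour of each vertex v ≠ r
  let C : V → Finset V := fun v => if h : v = r then ∅ else (D ⟨v, h⟩).1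
  have hC : ∀ v (h : v ≠ r), C v = (D ⟨v, h⟩).1 := fun v h => dif_neg h
  have hCE : ∀ v, v ≠ r → C v ∈ E := by
    intro v h
    rw [hC v h]
    exact (D ⟨v, h⟩).2
  have hvC : ∀ v, v ≠ r → v ∈ C v := by
    intro v h
    rw [hC v h]
    have := hme (D ⟨v, h⟩)
    rwa [hmD ⟨v, h⟩] at this
  have hCinj : ∀ v w, v ≠ r → w ≠ r → C v = C w → v = w := by
    intro v w hv hw hvw
    rw [hC v hv, hC w hw] at hvw
    have h2 : D ⟨v, hv⟩ = D ⟨w, hw⟩ := Subtype.ext hvw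
    have := em'.symm.injective h2
    exact congrArg Subtype.val this
  -- key counting lemma for the greedy construction
  have key : ∀ R : Finset V, r ∈ R → R ≠ Finset.univ →
      ∃ v, v ∉ R ∧ v ≠ r ∧ (C v ∩ R).Nonempty := by
    intro R hr hRu
    by_contra hno
    push_neg at hno
    set X : Finset V := Finset.univ \ R with hXdef
    have hXne : X.Nonempty := by
      rw [hXdef, Finset.sdiff_nonempty]
      intro hsub'
      exact hRu (Finset.eq_univ_iff_forall.2 fun x => hsub' (Finset.mem_univ x))
    have hmemX : ∀ v ∈ X, v ∉ R ∧ v ≠ r := by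
      intro v hv
      rw [hXdef, Finset.mem_sdiff] at hv
      exact ⟨hv.2, fun h => hv.2 (h ▸ hr)⟩
    have himg : X.image C ⊆ E.filter (fun e => e ⊆ X) := by
      intro e he
      obtain ⟨v, hv, rfl⟩ := Finset.mem_image.1 he
      obtain ⟨hvR, hvr⟩ := hmemX v hv
      refine Finset.mem_filter.2 ⟨hCE v hvr, fun x hx => ?_⟩
      rw [hXdef, Finset.mem_sdiff]
      refine ⟨Finset.mem_univ x, fun hxR => ?_⟩
      have : (C v ∩ R).Nonempty := ⟨x, Finset.mem_inter.2 ⟨hx, hxR⟩⟩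
      exact Finset.nonempty_iff_ne_empty.1 this (hno v hvR hvr)
    have hinj : Set.InjOn C X := by
      intro a ha b hb hab
      exact hCinj a b (hmemX a ha).2 (hmemX b hb).2 hab
    have hcard : X.card ≤ X.card - 1 :=
      calc X.card = (X.image C).card := (Finset.card_image_of_injOn hinj).symm
        _ ≤ (E.filter (fun e => e ⊆ X)).card := Finset.card_le_card himg
        _ ≤ X.card - 1 := hsub X
    have := Finset.card_pos.2 hXne
    omega
  -- greedy construction of the parent function
  have grow : ∀ (k : ℕ) (R : Finset V), (Finset.univ \ R).card ≤ k → r ∈ R →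
      ∃ (p : V → V) (ρ : V → ℕ), ∀ v, v ∉ R →
        p v ∈ C v ∧ p v ≠ v ∧ (p v ∈ R ∨ ρ (p v) < ρ v) := by
    intro k
    induction k with
    | zero =>
      intro R hcard _
      refine ⟨id, fun _ => 0, fun v hv => absurd ?_ hv⟩
      by_contra hvR
      have : v ∈ Finset.univ \ R := Finset.mem_sdiff.2 ⟨Finset.mem_univ v, hvR⟩
      have := Finset.card_pos.2 ⟨v, this⟩
      omega
    | succ k ih =>
      intro R hcard hr
      by_cases hRu : R = Finset.univ
      · subst hRu
        exact ⟨id, fun _ => 0, fun v hv => absurd (Finset.mem_univ v) hv⟩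
      · obtain ⟨v₀, hv₀R, hv₀r, u, hu⟩ := key R hr hRu
        have hu' := Finset.mem_inter.1 hu
        have hcard' : (Finset.univ \ insert v₀ R).card ≤ k := by
          have h1 : Finset.univ \ insert v₀ R = (Finset.univ \ R).erase v₀ := by
            ext x
            simp only [Finset.mem_sdiff, Finset.mem_insert, Finset.mem_erase,
              Finset.mem_univ, true_and]
            tauto
          have h2 : v₀ ∈ Finset.univ \ R :=
            Finset.mem_sdiff.2 ⟨Finset.mem_univ v₀, hv₀R⟩
          rw [h1, Finset.card_erase_of_mem h2]
          omega
        obtain ⟨p', ρ', hp'⟩ := ih (insert v₀ R) hcard' (Finset.mem_insert_of_mem hr)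
        set ρn : V → ℕ := fun v => if v = v₀ then 0 else ρ' v + 1 with hρn
        have hρn0 : ∀ v, v = v₀ → ρn v = 0 := by
          intro v hv; simp [hρn, hv]
        have hρn1 : ∀ v, v ≠ v₀ → ρn v = ρ' v + 1 := by
          intro v hv; simp [hρn, hv]
        refine ⟨Function.update p' v₀ u, ρn, fun v hvR => ?_⟩
        by_cases hv : v = v₀
        · subst hv
          rw [Function.update_self]
          refine ⟨hu'.1, fun h => hvR (h ▸ hu'.2), Or.inl hu'.2⟩
        · have hv' : v ∉ insert v₀ R := by
            simp only [Finset.mem_insert]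
            tauto
          obtain ⟨h1, h2, h3⟩ := hp' v hv'
          rw [Function.update_of_ne hv]
          refine ⟨h1, h2, ?_⟩
          have hρv : ρn v = ρ' v + 1 := hρn1 v hv
          rcases h3 with h3 | h3
          · rcases Finset.mem_insert.1 h3 with h | h
            · right
              have := hρn0 _ h
              omega
            · exact Or.inl h
          · right
            by_cases hpv : p' v = v₀
            · have := hρn0 _ hpv
              omega
            · have := hρn1 _ hpv
              omega
  obtain ⟨p, ρ₀, hp⟩ := grow (Fintype.card V) {r}
    (le_trans (Finset.card_le_univ _) (le_of_eq (Finset.card_univ)))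
    (Finset.mem_singleton_self r)
  -- the height function
  set μ : V → ℕ := fun v => if v = r then 0 else ρ₀ v + 1 with hμdef
  have hdesc : ∀ v, v ≠ r → p v ∈ C v ∧ p v ≠ v ∧ μ (p v) < μ v := by
    intro v hv
    obtain ⟨h1, h2, h3⟩ := hp v (by simp [hv])
    refine ⟨h1, h2, ?_⟩
    simp only [hμdef]
    rw [if_neg hv]
    by_cases hpr : p v = r
    · rw [if_pos hpr]; omega
    · rw [if_neg hpr]
      rcases h3 with h3 | h3
      · exact absurd (Finset.mem_singleton.1 h3) hpr
      · omega
  -- the tree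
  set S : Set (Sym2 V) := {s | ∃ v, v ≠ r ∧ s = s(v, p v)} with hSdef
  set T : SimpleGraph V := SimpleGraph.fromEdgeSet S with hTdef
  have hTadj : ∀ a b : V, T.Adj a b ↔ (s(a, b) ∈ S ∧ a ≠ b) := by
    intro a b
    rw [hTdef, SimpleGraph.fromEdgeSet_adj]
  -- edges from a vertex of locally maximal height go to its parent
  have hchild : ∀ a b : V, T.Adj a b → μ b ≤ μ a → b = p a ∧ a ≠ r := by
    intro a b hab hba
    obtain ⟨⟨v, hv, heq⟩, hne⟩ := (hTadj a b).1 hab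
    rw [Sym2.eq_iff] at heq
    rcases heq with ⟨rfl, rfl⟩ | ⟨rfl, rfl⟩
    · exact ⟨rfl, hv⟩
    · have := (hdesc b hv).2.2
      omega
  -- connectivity
  have reach : ∀ v, T.Reachable v r := by
    have main : ∀ (N : ℕ) (v : V), μ v ≤ N → T.Reachable v r := by
      intro N
      induction N with
      | zero =>
        intro v hv
        by_cases h : v = r
        · subst h; exact SimpleGraph.Reachable.refl _
        · exfalso; simp only [hμdef] at hv; rw [if_neg h] at hv; omega
      | succ N ih =>
        intro v hv
        by_cases h : v = r
        · subst h; exact SimpleGraph.Reachable.refl _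
        · obtain ⟨h1, h2, h3⟩ := hdesc v h
          have hadj : T.Adj v (p v) :=
            (hTadj v (p v)).2 ⟨⟨v, h, rfl⟩, fun he => h2 he.symm⟩
          exact hadj.reachable.trans (ih (p v) (by omega))
    exact fun v => main (μ v) v le_rfl
  have hconn : T.Connected := by
    rw [SimpleGraph.connected_iff]
    exact ⟨fun a b => (reach a).trans (reach b).symm, ⟨r⟩⟩
  -- acyclicity
  have hacyclic : T.IsAcyclic := by
    intro u c hc
    obtain ⟨x, hx, hmax⟩ := Finset.exists_max_image c.support.toFinset μ
      ⟨u, List.mem_toFinset.2 c.start_mem_support⟩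
    have hx' : x ∈ c.support := List.mem_toFinset.1 hx
    set c' : T.Walk x x := c.rotate x hx' with hc'def
    have hc' : c'.IsCycle := hc.rotate hx'
    have hsupmax : ∀ w, w ∈ c'.support → μ w ≤ μ x := by
      intro w hw
      rcases List.mem_cons.1 (c'.support_eq_cons ▸ hw) with h | h
      · exact h ▸ le_rfl
      · have hrot := c.support_rotate x hx'
        have : w ∈ c.support.tail := hrot.mem_iff.1 h
        exact hmax w (List.mem_toFinset.2 (List.mem_of_mem_tail this))
    have hclaimhalf : ∀ a b : V, s(a, b) ∈ c'.edges → x = a → s(a, b) = s(x, p x) := by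
      intro a b hab hax
      have hadj : T.Adj a b := c'.adj_of_mem_edges hab
      have hbsup : b ∈ c'.support := c'.snd_mem_support_of_mem_edges hab
      have hle : μ b ≤ μ a := hax ▸ hsupmax b hbsup
      have hb := hchild a b hadj hle
      rw [hb.1, ← hax]
    have hclaim : ∀ e, e ∈ c'.edges → x ∈ e → e = s(x, p x) := by
      intro e
      induction e with
      | h a b =>
        intro he hxe
        rcases Sym2.mem_iff.1 hxe with h | h
        · exact hclaimhalf a b he h
        · rw [Sym2.eq_swap] at he ⊢
          exact hclaimhalf b a he h
    obtain ⟨y, hxy, q, hceq⟩ := (SimpleGraph.Walk.not_nil_iff).1 hc'.not_nil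
    have hcyc := hceq ▸ hc'
    have hiff := (SimpleGraph.Walk.cons_isCycle_iff q hxy).1 hcyc
    have hyx : y ≠ x := fun h => T.irrefl (h ▸ hxy)
    obtain ⟨z, hz⟩ := walk_exists_edge_end q hyx
    have hz' : s(z, x) ∈ c'.edges := by
      rw [hceq, SimpleGraph.Walk.edges_cons]
      exact List.mem_cons_of_mem _ hz
    have hfirst : s(x, y) ∈ c'.edges := by
      rw [hceq, SimpleGraph.Walk.edges_cons]
      exact List.mem_cons_self
    have e1 : s(z, x) = s(x, p x) := hclaim _ hz' (Sym2.mem_mk_right z x)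
    have e2 : s(x, y) = s(x, p x) := hclaim _ hfirst (Sym2.mem_mk_left x y)
    exact hiff.2 (by rw [e2, ← e1]; exact hz)
  -- the colouring
  set child : Sym2 V → V := fun s =>
    if h : ∃ v, v ≠ r ∧ s = s(v, p v) then h.choose else r with hchilddef
  have hchild_spec : ∀ s ∈ T.edgeSet, child s ≠ r ∧ s = s(child s, p (child s)) := by
    intro s hs
    rw [hTdef, SimpleGraph.edgeSet_fromEdgeSet] at hs
    obtain ⟨hsS, _⟩ := hs
    have hex : ∃ v, v ≠ r ∧ s = s(v, p v) := hsS
    simp only [hchilddef]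
    rw [dif_pos hex]
    exact hex.choose_spec
  have hunique : ∀ v w, v ≠ r → w ≠ r → s(v, p v) = s(w, p w) → v = w := by
    intro v w hv hw h
    rw [Sym2.eq_iff] at h
    rcases h with ⟨h1, _⟩ | ⟨h1, h2⟩
    · exact h1
    · exfalso
      have d1 := (hdesc v hv).2.2
      have d2 := (hdesc w hw).2.2
      have h3 : p (p w) = w := by rw [← h1, h2]
      rw [h1] at d1
      rw [h3] at d1
      omega
  refine ⟨T, fun s => C (child s), ⟨hconn, hacyclic⟩, ?_, ?_⟩
  · intro s hs t ht heq
    obtain ⟨hs1, hs2⟩ := hchild_spec s hs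
    obtain ⟨ht1, ht2⟩ := hchild_spec t ht
    have := hCinj _ _ hs1 ht1 heq
    rw [hs2, ht2, this]
  · intro s hs
    obtain ⟨hs1, hs2⟩ := hchild_spec s hs
    refine ⟨hCE _ hs1, fun v hv => ?_⟩
    rw [hs2, Sym2.mem_iff] at hv
    rcases hv with rfl | rfl
    · exact hvC _ hs1
    · exact (hdesc _ hs1).1
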